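/- Let d ≥ 1, let X and Y be independent ℝ^d-valued random variables each with density f with respect to Lebesgue measure, let H be an invertible d×d real matrix, let K : ℝ^d → ℝ be bounded, measurable, compactly supported and even (K(−u) = K(u) for all u), and let ρ : ℝ^d → ℝ be bounded and measurable. Then for all x, t ∈ ℝ^d, E[K_H(X − x) K_H(X − t) K_H(Y − x) K_H(Y − t) ρ(X − Y)²] = |det H|⁻² ∫∫_{ℝ^d×ℝ^d} K(−p + H⁻¹(x − t)) K(−q + H⁻¹(x − t)) K(p) K(q) ρ(H(p − q))² f(t + Hp) f(t + Hq) dp dq. -/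

import Mathlib

open MeasureTheory ProbabilityTheory Filter
open scoped ENNReal NNReal Topology

noncomputable section

/-- The rescaled kernel `K_H(v) = |det H|⁻¹ * K (H⁻¹ v)`. -/
def kernelScaled {d : ℕ} (H : Matrix (Fin d) (Fin d) ℝ) (K : (Fin d → ℝ) → ℝ)
    (v : Fin d → ℝ) : ℝ :=
  |H.det|⁻¹ * K (H⁻¹.mulVec v)

lemma cov_aux {d : ℕ} (H : Matrix (Fin d) (Fin d) ℝ) (hH : H.det ≠ 0) (t : Fin d → ℝ)
    (F : (Fin d → ℝ) → ℝ) (hF : Measurable F) :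
    ∫ v, F v = |H.det| * ∫ p, F (t + H.mulVec p) := by
  have hmap := Real.map_matrix_volume_pi_eq_smul_volume_pi (M := H) hH
  have hlin : Measurable (fun p : Fin d → ℝ => Matrix.toLin' H p) :=
    (LinearMap.continuous_of_finiteDimensional (Matrix.toLin' H)).measurable
  have h1 : ∫ p, F (t + H.mulVec p) = ∫ v, F (t + v) ∂(Measure.map (Matrix.toLin' H) volume) := by
    rw [integral_map hlin.aemeasurable]
    · simp only [Matrix.toLin'_apply]
    · exact (hF.comp (measurable_const_add t)).aestronglyMeasurable
  rw [h1, hmap, integral_smul_measure, ENNReal.toReal_ofReal (abs_nonneg _),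
    integral_add_left_eq_self (μ := volume) F t, smul_eq_mul, abs_inv]
  field_simp

set_option maxHeartbeats 1000000 in
/-- Expectation computation in Lemma 5:
`E[K_H(X−x) K_H(X−t) K_H(Y−x) K_H(Y−t) ρ(X−Y)²]
  = |det H|⁻² ∫∫ K(−p+H⁻¹(x−t)) K(−q+H⁻¹(x−t)) K(p) K(q) ρ(H(p−q))² f(t+Hp) f(t+Hq) dp dq`. -/
theorem expectation_W5n {d : ℕ} (hd : 1 ≤ d)
    {Ω : Type*} [MeasurableSpace Ω] (μ : Measure Ω) [IsProbabilityMeasure μ]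
    (X Y : Ω → (Fin d → ℝ)) (hXmeas : Measurable X) (hYmeas : Measurable Y)
    (hindep : IndepFun X Y μ)
    (f : (Fin d → ℝ) → ℝ) (hfmeas : Measurable f) (hfnonneg : ∀ y, 0 ≤ f y)
    (hlawX : μ.map X = volume.withDensity (fun y => ENNReal.ofReal (f y)))
    (hlawY : μ.map Y = volume.withDensity (fun y => ENNReal.ofReal (f y)))
    (H : Matrix (Fin d) (Fin d) ℝ) (hH : H.det ≠ 0)
    (K : (Fin d → ℝ) → ℝ) (hKmeas : Measurable K) (hKbd : ∃ C, ∀ u, |K u| ≤ C)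
    (hKsupp : HasCompactSupport K) (hKeven : ∀ u, K (-u) = K u)
    (ρ : (Fin d → ℝ) → ℝ) (hρmeas : Measurable ρ) (hρbd : ∃ C, ∀ u, |ρ u| ≤ C)
    (x t : Fin d → ℝ) :
    ∫ ω, kernelScaled H K (X ω - x) * kernelScaled H K (X ω - t) *
        kernelScaled H K (Y ω - x) * kernelScaled H K (Y ω - t) * (ρ (X ω - Y ω)) ^ 2 ∂μ =
      (|H.det| ^ 2)⁻¹ *
        ∫ p, ∫ q, K (-p + H⁻¹.mulVec (x - t)) * K (-q + H⁻¹.mulVec (x - t)) *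
          K p * K q * (ρ (H.mulVec (p - q))) ^ 2 *
          f (t + H.mulVec p) * f (t + H.mulVec q) := by
  obtain ⟨CK, hCK⟩ := hKbd
  obtain ⟨Cρ, hCρ⟩ := hρbd
  have hdet0 : |H.det| ≠ 0 := abs_ne_zero.mpr hH
  -- abbreviations
  set ν : Measure (Fin d → ℝ) := volume.withDensity (fun y => ENNReal.ofReal (f y)) with hν
  set G : (Fin d → ℝ) → (Fin d → ℝ) → ℝ := fun u v =>
    kernelScaled H K (u - x) * kernelScaled H K (u - t) *
      kernelScaled H K (v - x) * kernelScaled H K (v - t) * (ρ (u - v)) ^ 2 with hG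
  -- measurability
  have hmulVecInv : Measurable (fun v : Fin d → ℝ => H⁻¹.mulVec v) := by
    have := (LinearMap.continuous_of_finiteDimensional (Matrix.toLin' H⁻¹)).measurable
    exact this
  have hKS : Measurable (kernelScaled H K) :=
    measurable_const.mul (hKmeas.comp hmulVecInv)
  have hGmeas : Measurable (fun z : (Fin d → ℝ) × (Fin d → ℝ) => G z.1 z.2) :=
    ((((hKS.comp (measurable_fst.sub measurable_const)).mul
      (hKS.comp (measurable_fst.sub measurable_const))).mul
      (hKS.comp (measurable_snd.sub measurable_const))).mul
      (hKS.comp (measurable_snd.sub measurable_const))).mul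
      ((hρmeas.comp (measurable_fst.sub measurable_snd)).pow_const 2)
  -- bounds
  have hCK0 : 0 ≤ CK := le_trans (abs_nonneg _) (hCK 0)
  have hKSbd : ∀ v, |kernelScaled H K v| ≤ |H.det|⁻¹ * CK := by
    intro v
    rw [kernelScaled, abs_mul, abs_inv, abs_abs]
    exact mul_le_mul_of_nonneg_left (hCK _) (by positivity)
  have hGbd : ∀ u v, |G u v| ≤
      ((|H.det|⁻¹ * CK) * (|H.det|⁻¹ * CK) * (|H.det|⁻¹ * CK) * (|H.det|⁻¹ * CK)) * Cρ ^ 2 := by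
    intro u v
    have h5 : |ρ (u - v)| ^ 2 ≤ Cρ ^ 2 := pow_le_pow_left₀ (abs_nonneg _) (hCρ _) 2
    calc |G u v| = |kernelScaled H K (u - x)| * |kernelScaled H K (u - t)| *
          |kernelScaled H K (v - x)| * |kernelScaled H K (v - t)| * |ρ (u - v)| ^ 2 := by
          simp [hG, abs_mul, abs_pow]
      _ ≤ _ := by
          gcongr <;> first
            | exact abs_nonneg _
            | positivity
            | exact hKSbd _
            | exact h5
  -- probability measure instances
  haveI hνprob : IsProbabilityMeasure ν := by
    rw [← hlawX]; exact Measure.isProbabilityMeasure_map hXmeas.aemeasurable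
  -- integrability on the product
  have hint : Integrable (fun z : (Fin d → ℝ) × (Fin d → ℝ) => G z.1 z.2) (ν.prod ν) := by
    refine ⟨hGmeas.aestronglyMeasurable, HasFiniteIntegral.of_bounded
      (C := ((|H.det|⁻¹ * CK) * (|H.det|⁻¹ * CK) * (|H.det|⁻¹ * CK) * (|H.det|⁻¹ * CK)) * Cρ ^ 2)
      (ae_of_all _ fun z => ?_)⟩
    simpa [Real.norm_eq_abs] using hGbd z.1 z.2
  -- Step 1 : independence and laws
  have hmapXY : μ.map (fun ω => (X ω, Y ω)) = (μ.map X).prod (μ.map Y) :=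
    (indepFun_iff_map_prod_eq_prod_map_map hXmeas.aemeasurable hYmeas.aemeasurable).mp hindep
  have step1 : ∫ ω, kernelScaled H K (X ω - x) * kernelScaled H K (X ω - t) *
      kernelScaled H K (Y ω - x) * kernelScaled H K (Y ω - t) * (ρ (X ω - Y ω)) ^ 2 ∂μ
      = ∫ u, ∫ v, G u v ∂ν ∂ν := by
    have h0 : ∫ ω, kernelScaled H K (X ω - x) * kernelScaled H K (X ω - t) *
        kernelScaled H K (Y ω - x) * kernelScaled H K (Y ω - t) * (ρ (X ω - Y ω)) ^ 2 ∂μ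
        = ∫ z : (Fin d → ℝ) × (Fin d → ℝ), G z.1 z.2 ∂(μ.map (fun ω => (X ω, Y ω))) := by
      rw [integral_map (hXmeas.prodMk hYmeas).aemeasurable hGmeas.aestronglyMeasurable]
    rw [h0, hmapXY, hlawX, hlawY, integral_prod _ hint]
  rw [step1]
  -- Step 2 : replace withDensity integrals by weighted Lebesgue integrals
  have hconv : ∀ (g : (Fin d → ℝ) → ℝ), ∫ y, g y ∂ν = ∫ y, f y * g y := by
    intro g
    rw [hν, show (fun y => ENNReal.ofReal (f y)) = (fun y => ((fun y => (f y).toNNReal) y : ℝ≥0∞)) from rfl,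
      integral_withDensity_eq_integral_smul
        (show Measurable fun y => (f y).toNNReal from measurable_real_toNNReal.comp hfmeas) g]
    congr 1; funext y
    rw [NNReal.smul_def, Real.coe_toNNReal _ (hfnonneg y), smul_eq_mul]
  have step2 : ∫ u, ∫ v, G u v ∂ν ∂ν = ∫ u, f u * (∫ v, f v * G u v) := by
    rw [hconv]
    congr 1; funext u
    rw [hconv]
  rw [step2]
  -- measurability of the parametric integral
  have hinner_meas : Measurable (fun u => ∫ v, f v * G u v) :=
    (StronglyMeasurable.integral_prod_right'
      (f := fun z : (Fin d → ℝ) × (Fin d → ℝ) => f z.2 * G z.1 z.2)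
      ((hfmeas.comp measurable_snd).mul hGmeas).stronglyMeasurable).measurable
  -- Step 3 : change of variables in outer integral
  rw [cov_aux H hH t (fun u => f u * ∫ v, f v * G u v) (hfmeas.mul hinner_meas)]
  -- Step 4 : change of variables in inner integral plus pointwise simplification
  have hHinv : ∀ p : Fin d → ℝ, H⁻¹.mulVec (H.mulVec p) = p := by
    intro p
    rw [Matrix.mulVec_mulVec, Matrix.nonsing_inv_mul H (isUnit_iff_ne_zero.mpr hH),
      Matrix.one_mulVec]
  have e1 : ∀ p : Fin d → ℝ, kernelScaled H K (t + H.mulVec p - x)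
      = |H.det|⁻¹ * K (-p + H⁻¹.mulVec (x - t)) := by
    intro p
    rw [kernelScaled]
    congr 1
    rw [← hKeven (-p + H⁻¹.mulVec (x - t))]
    congr 1
    have h2 : t + H.mulVec p - x = H.mulVec p - (x - t) := by abel
    rw [h2, Matrix.mulVec_sub, hHinv]
    abel
  have e2 : ∀ p : Fin d → ℝ, kernelScaled H K (t + H.mulVec p - t) = |H.det|⁻¹ * K p := by
    intro p
    rw [kernelScaled]
    congr 2
    rw [show t + H.mulVec p - t = H.mulVec p by abel, hHinv]
  have e3 : ∀ p q : Fin d → ℝ, (t + H.mulVec p) - (t + H.mulVec q) = H.mulVec (p - q) := by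
    intro p q
    rw [Matrix.mulVec_sub]; abel
  have hsimp : ∀ p q : Fin d → ℝ,
      f (t + H.mulVec p) * (f (t + H.mulVec q) * G (t + H.mulVec p) (t + H.mulVec q))
      = (|H.det|⁻¹) ^ 4 * (K (-p + H⁻¹.mulVec (x - t)) * K (-q + H⁻¹.mulVec (x - t)) *
          K p * K q * (ρ (H.mulVec (p - q))) ^ 2 * f (t + H.mulVec p) * f (t + H.mulVec q)) := by
    intro p q
    simp only [hG]
    rw [e1 p, e1 q, e2 p, e2 q, e3 p q]
    ring
  have step4 : ∀ p : Fin d → ℝ,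
      f (t + H.mulVec p) * (∫ v, f v * G (t + H.mulVec p) v)
      = (|H.det| * (|H.det|⁻¹) ^ 4) *
        ∫ q, K (-p + H⁻¹.mulVec (x - t)) * K (-q + H⁻¹.mulVec (x - t)) *
          K p * K q * (ρ (H.mulVec (p - q))) ^ 2 * f (t + H.mulVec p) * f (t + H.mulVec q) := by
    intro p
    have hGu : Measurable (G (t + H.mulVec p)) := by
      simp only [hG]
      exact ((measurable_const.mul (hKS.comp (measurable_id.sub measurable_const))).mul
        (hKS.comp (measurable_id.sub measurable_const))).mul
        ((hρmeas.comp (measurable_const.sub measurable_id)).pow_const 2)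
    have hFq : Measurable (fun v => f v * G (t + H.mulVec p) v) := hfmeas.mul hGu
    rw [cov_aux H hH t _ hFq]
    calc f (t + H.mulVec p) * (|H.det| * ∫ q, f (t + H.mulVec q) * G (t + H.mulVec p) (t + H.mulVec q))
        = |H.det| * ∫ q, f (t + H.mulVec p) * (f (t + H.mulVec q) * G (t + H.mulVec p) (t + H.mulVec q)) := by
          rw [integral_const_mul]; ring
      _ = |H.det| * ∫ q, (|H.det|⁻¹) ^ 4 * (K (-p + H⁻¹.mulVec (x - t)) * K (-q + H⁻¹.mulVec (x - t)) *
            K p * K q * (ρ (H.mulVec (p - q))) ^ 2 * f (t + H.mulVec p) * f (t + H.mulVec q)) := by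
          congr 1
          exact integral_congr_ae (Filter.Eventually.of_forall fun q => hsimp p q)
      _ = (|H.det| * (|H.det|⁻¹) ^ 4) * ∫ q, K (-p + H⁻¹.mulVec (x - t)) * K (-q + H⁻¹.mulVec (x - t)) *
            K p * K q * (ρ (H.mulVec (p - q))) ^ 2 * f (t + H.mulVec p) * f (t + H.mulVec q) := by
          rw [integral_const_mul]; ring
  calc |H.det| * ∫ p, f (t + H.mulVec p) * (∫ v, f v * G (t + H.mulVec p) v)
      = |H.det| * ∫ p, (|H.det| * (|H.det|⁻¹) ^ 4) *
          ∫ q, K (-p + H⁻¹.mulVec (x - t)) * K (-q + H⁻¹.mulVec (x - t)) *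
            K p * K q * (ρ (H.mulVec (p - q))) ^ 2 * f (t + H.mulVec p) * f (t + H.mulVec q) := by
        congr 1
        exact integral_congr_ae (Filter.Eventually.of_forall step4)
    _ = (|H.det| ^ 2)⁻¹ * ∫ p, ∫ q, K (-p + H⁻¹.mulVec (x - t)) * K (-q + H⁻¹.mulVec (x - t)) *
          K p * K q * (ρ (H.mulVec (p - q))) ^ 2 * f (t + H.mulVec p) * f (t + H.mulVec q) := by
        rw [integral_const_mul, ← mul_assoc]
        congr 1
        rw [inv_pow, sq]
        field_simp
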